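/- arXiv:math/0506369 — 2 statements merged into one kernel-verified Lean document; each statement's English description precedes it below -/
import Mathlib

section
/- Let (M_t) be a strictly positive continuous local martingale with M_0 = 1, let I_t = inf_{s≤t} M_s, and set Y*_t = M_t/I_t − 1. Then Y* belongs to E(M) and is the smallest element of E(M): for every Y ∈ E(M) and every t, Y*_t ≤ Y_t. Consequently Y* has more zeros than any other local submartingale in E(M), i.e. {t : Y_t = 0} ⊆ {t : Y*_t = 0} for every Y ∈ E(M). -/
open MeasureTheory Filter Set Topology
open scoped NNReal ENNReal Classical

noncomputable section

/-- The Lebesgue–Stieltjes measure associated with a function `f : ℝ → ℝ`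
(with junk value `0` when `f` is not monotone right-continuous). -/
def sMeasure (f : ℝ → ℝ) : Measure ℝ :=
  if h : Monotone f ∧ ∀ x, ContinuousWithinAt f (Set.Ici x) x then
    StieltjesFunction.measure ⟨f, h.1, h.2⟩ else 0

/-- The pathwise Lebesgue–Stieltjes integral `∫_(0,t] H_s dA_s`. -/
def sInt {Ω : Type*} (A H : ℝ≥0 → Ω → ℝ) (t : ℝ≥0) (ω : Ω) : ℝ :=
  ∫ s in Set.Ioc (0:ℝ) (t:ℝ), H s.toNNReal ω ∂(sMeasure fun x => A x.toNNReal ω)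

variable {Ω : Type*} {m0 : MeasurableSpace Ω}

/-- The running infimum `I_t = inf_{s ≤ t} M_s`. -/
def infP (M : ℝ≥0 → Ω → ℝ) (t : ℝ≥0) (ω : Ω) : ℝ := ⨅ s : Set.Iic t, M s.1 ω

/-- The running supremum `sup_{s ≤ t} M_s`. -/
def supP (M : ℝ≥0 → Ω → ℝ) (t : ℝ≥0) (ω : Ω) : ℝ := ⨆ s : Set.Iic t, M s.1 ω

/-- A process is a local martingale if there is a localizing sequence of stopping
times, increasing a.s. to infinity, reducing it to a martingale. -/
def IsLocalMartingale (ℱ : Filtration ℝ≥0 m0) (μ : Measure Ω) (X : ℝ≥0 → Ω → ℝ) : Prop :=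
  ∃ τ : ℕ → Ω → ℝ≥0, (∀ n, IsStoppingTime ℱ (fun ω => ((τ n ω : ℝ≥0) : WithTop ℝ≥0))) ∧
    (∀ᵐ ω ∂μ, Tendsto (fun n => τ n ω) atTop atTop) ∧
    ∀ n, Martingale (fun t ω => X (min t (τ n ω)) ω) ℱ μ

/-- Continuous local martingale. -/
def ContLocMart (ℱ : Filtration ℝ≥0 m0) (μ : Measure Ω) (X : ℝ≥0 → Ω → ℝ) : Prop :=
  IsLocalMartingale ℱ μ X ∧ Adapted ℱ X ∧ ∀ ω, Continuous fun t => X t ω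

/-- Continuous adapted increasing process. -/
def IncreasingProc (ℱ : Filtration ℝ≥0 m0) (C : ℝ≥0 → Ω → ℝ) : Prop :=
  Adapted ℱ C ∧ (∀ ω, Continuous fun t => C t ω) ∧ ∀ ω, Monotone fun t => C t ω

/-- `Y = m + ℓ` is the Doob-Meyer decomposition of the continuous local
submartingale `Y`: `m` is a continuous local martingale vanishing at `0` and `ℓ` is a
continuous adapted increasing process vanishing at `0`. -/
def DoobMeyer (ℱ : Filtration ℝ≥0 m0) (μ : Measure Ω) (Y m ℓ : ℝ≥0 → Ω → ℝ) : Prop :=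
  ContLocMart ℱ μ m ∧ (∀ ω, m 0 ω = 0) ∧ IncreasingProc ℱ ℓ ∧ (∀ ω, ℓ 0 ω = 0) ∧
    ∀ t ω, Y t ω = m t ω + ℓ t ω

/-- The (Stieltjes) measure `dA` is carried by the set `{t : X_t = 0}`: pathwise, `A`
does not increase on any interval where `X` does not vanish. -/
def CarriedByZeros (X A : ℝ≥0 → Ω → ℝ) (ω : Ω) : Prop :=
  ∀ s t : ℝ≥0, s ≤ t → (∀ u, s ≤ u → u ≤ t → X u ω ≠ 0) → A t ω = A s ω

/-- Class `(Σ)`: a nonnegative continuous local submartingale, vanishing at `0`, whose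
increasing part `dA` is carried by its zero set. -/
def IsClassSigma (ℱ : Filtration ℝ≥0 m0) (μ : Measure Ω) (X : ℝ≥0 → Ω → ℝ) : Prop :=
  (∀ t ω, 0 ≤ X t ω) ∧ (∀ ω, X 0 ω = 0) ∧ (∀ ω, Continuous fun t => X t ω) ∧
    ∃ N A, DoobMeyer ℱ μ X N A ∧ ∀ᵐ ω ∂μ, CarriedByZeros X A ω

/-- Class `(D)`: the family `{Y_T : T a (finite) stopping time}` is uniformly integrable. -/
def IsClassD (ℱ : Filtration ℝ≥0 m0) (μ : Measure Ω) (Y : ℝ≥0 → Ω → ℝ) : Prop :=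
  UniformIntegrable (fun τ : {τ : Ω → ℝ≥0 // IsStoppingTime ℱ (fun ω => ((τ ω : ℝ≥0) : WithTop ℝ≥0))} => fun ω => Y (τ.1 ω) ω) 1 μ

/-- `Y = M C - 1` is the multiplicative decomposition of `Y`:
`M` a strictly positive continuous local martingale with `M_0 = 1`, and `C` a continuous
adapted increasing process with `C_0 = 1`. -/
def MultDecomp (ℱ : Filtration ℝ≥0 m0) (μ : Measure Ω) (Y M C : ℝ≥0 → Ω → ℝ) : Prop :=
  ContLocMart ℱ μ M ∧ (∀ t ω, 0 < M t ω) ∧ (∀ ω, M 0 ω = 1) ∧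
    IncreasingProc ℱ C ∧ (∀ ω, C 0 ω = 1) ∧ ∀ t ω, Y t ω = M t ω * C t ω - 1

/-- `Q = ⟨X⟩` is the quadratic variation of the continuous local martingale `X`:
the continuous adapted increasing process, vanishing at `0`, such that `X² - Q` is a
local martingale. -/
def IsQuadVar (ℱ : Filtration ℝ≥0 m0) (μ : Measure Ω) (X Q : ℝ≥0 → Ω → ℝ) : Prop :=
  IncreasingProc ℱ Q ∧ (∀ ω, Q 0 ω = 0) ∧
    IsLocalMartingale ℱ μ fun t ω => X t ω ^ 2 - Q t ω

/-- `Q = ⟨X, Y⟩` is the quadratic covariation, obtained by polarization. -/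
def IsCovar (ℱ : Filtration ℝ≥0 m0) (μ : Measure Ω) (X Y Q : ℝ≥0 → Ω → ℝ) : Prop :=
  ∃ QX QY QXY, IsQuadVar ℱ μ X QX ∧ IsQuadVar ℱ μ Y QY ∧
    IsQuadVar ℱ μ (fun t ω => X t ω + Y t ω) QXY ∧
    ∀ t ω, Q t ω = (QXY t ω - QX t ω - QY t ω) / 2

/-- `V = ∫_0^· H_s dm_s` is the stochastic (Itô) integral of `H` against the continuous
local martingale `m` : `V` is the continuous local martingale, vanishing at `0`, such that
`⟨V, m⟩ = ∫ H d⟨m⟩` and `⟨V⟩ = ∫ H² d⟨m⟩`. -/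
def IsStochInt (ℱ : Filtration ℝ≥0 m0) (μ : Measure Ω) (H m V : ℝ≥0 → Ω → ℝ) : Prop :=
  IsLocalMartingale ℱ μ V ∧ (∀ ω, Continuous fun t => V t ω) ∧ (∀ ω, V 0 ω = 0) ∧
    ∃ Qm QV QVm, IsQuadVar ℱ μ m Qm ∧ IsQuadVar ℱ μ V QV ∧ IsCovar ℱ μ V m QVm ∧
      ∀ᵐ ω ∂μ, ∀ t, QVm t ω = sInt Qm H t ω ∧
        QV t ω = sInt Qm (fun s ω => H s ω ^ 2) t ω

/-- `L` is the (semimartingale) local time at `0` of the continuous local martingale `K`,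
characterized by Tanaka's formula `|K_t| = ∫_0^t sgn(K_s) dK_s + L_t`. -/
def IsLocalTimeAtZero (ℱ : Filtration ℝ≥0 m0) (μ : Measure Ω) (K L : ℝ≥0 → Ω → ℝ) : Prop :=
  ∃ V, IsStochInt ℱ μ (fun s ω => Real.sign (K s ω)) K V ∧
    ∀ᵐ ω ∂μ, ∀ t, |K t ω| = V t ω + L t ω

/-- A random time `L` is honest if for every `t` it agrees on `{L < t}` with some
`ℱ t`-measurable random variable. -/
def IsHonest (ℱ : Filtration ℝ≥0 m0) (L : Ω → ℝ≥0) : Prop :=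
  ∀ t : ℝ≥0, ∃ Lt : Ω → ℝ≥0, Measurable[ℱ t] Lt ∧ ∀ ω, L ω < t → L ω = Lt ω

/-- A random time `L` avoids stopping times if `P(L = T) = 0` for every stopping time `T`. -/
def AvoidsStoppingTimes (ℱ : Filtration ℝ≥0 m0) (μ : Measure Ω) (L : Ω → ℝ≥0) : Prop :=
  ∀ τ : Ω → ℝ≥0, IsStoppingTime ℱ (fun ω => ((τ ω : ℝ≥0) : WithTop ℝ≥0)) → μ {ω | L ω = τ ω} = 0

/-- The end `g = sup {t : (t, ω) ∈ H}` of a random set `H`. -/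
def endTime {Ω : Type*} (H : Set (ℝ≥0 × Ω)) (ω : Ω) : ℝ≥0 := sSup {t | (t, ω) ∈ H}

/-- A random set `H` with end `g` is saturated if `H = {t : P(g ≤ t | ℱ_t) = 0}`,
i.e. `H` is equal to its predictable shadow. -/
def IsSaturated (ℱ : Filtration ℝ≥0 m0) (μ : Measure Ω) (H : Set (ℝ≥0 × Ω)) : Prop :=
  ∀ Z : ℝ≥0 → Ω → ℝ, (∀ ω, Continuous fun t => Z t ω) →
    (∀ t, Z t =ᵐ[μ] μ[Set.indicator {ω | endTime H ω ≤ t} (fun _ => (1:ℝ)) | ℱ t]) →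
    ∀ᵐ ω ∂μ, ∀ t, ((t, ω) ∈ H ↔ Z t ω = 0)

/-- All martingales of the filtration are continuous (i.e. have continuous versions). -/
def AllMartingalesContinuous (ℱ : Filtration ℝ≥0 m0) (μ : Measure Ω) : Prop :=
  ∀ f : ℝ≥0 → Ω → ℝ, Martingale f ℱ μ →
    ∃ g : ℝ≥0 → Ω → ℝ, (∀ t, f t =ᵐ[μ] g t) ∧ ∀ ω, Continuous fun t => g t ω

/-- `B` is a standard Brownian motion for the filtration `ℱ`. -/
def IsBrownian (ℱ : Filtration ℝ≥0 m0) (μ : Measure Ω) (B : ℝ≥0 → Ω → ℝ) : Prop :=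
  Adapted ℱ B ∧ (∀ ω, B 0 ω = 0) ∧ (∀ ω, Continuous fun t => B t ω) ∧
    ∀ s t : ℝ≥0, s ≤ t →
      ProbabilityTheory.Indep (MeasurableSpace.comap (fun ω => B t ω - B s ω) inferInstance)
        (ℱ s) μ ∧
      μ.map (fun ω => B t ω - B s ω) = ProbabilityTheory.gaussianReal 0 (t - s)

end
section Aux
variable {Ω : Type*}

lemma infP_le (M : ℝ≥0 → Ω → ℝ) (hpos : ∀ t ω, 0 < M t ω) {s t : ℝ≥0} (hst : s ≤ t) (ω : Ω) :
    infP M t ω ≤ M s ω := by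
  have hbdd : BddBelow (Set.range fun u : Set.Iic t => M u.1 ω) :=
    ⟨0, by rintro x ⟨u, rfl⟩; exact (hpos _ _).le⟩
  exact ciInf_le hbdd ⟨s, hst⟩

lemma le_infP (M : ℝ≥0 → Ω → ℝ) {t : ℝ≥0} {ω : Ω} {c : ℝ}
    (h : ∀ s : ℝ≥0, s ≤ t → c ≤ M s ω) : c ≤ infP M t ω :=
  le_ciInf fun s => h s.1 s.2

lemma infP_pos (M : ℝ≥0 → Ω → ℝ) (hpos : ∀ t ω, 0 < M t ω)
    (hcont : ∀ ω, Continuous fun t => M t ω) (t : ℝ≥0) (ω : Ω) : 0 < infP M t ω := by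
  have hc : IsCompact (Set.Iic t) := by
    rw [← Set.Icc_bot]; exact isCompact_Icc
  obtain ⟨s₀, hs₀, hmin⟩ := hc.exists_isMinOn ⟨0, Set.mem_Iic.2 (zero_le : 0 ≤ t)⟩
    ((hcont ω).continuousOn : ContinuousOn (fun u => M u ω) (Set.Iic t))
  exact lt_of_lt_of_le (hpos s₀ ω) (le_infP M fun s hs => hmin hs)

lemma infP_anti (M : ℝ≥0 → Ω → ℝ) (hpos : ∀ t ω, 0 < M t ω) (ω : Ω) :
    Antitone fun t => infP M t ω := fun t₁ t₂ h =>
  le_infP M fun s hs => infP_le M hpos (hs.trans h) ω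

lemma infP_zero (M : ℝ≥0 → Ω → ℝ) (hpos : ∀ t ω, 0 < M t ω) (ω : Ω) :
    infP M 0 ω = M 0 ω := by
  refine le_antisymm (infP_le M hpos le_rfl ω) (le_infP M fun s hs => ?_)
  rw [le_zero_iff.mp hs]

lemma infP_continuous (M : ℝ≥0 → Ω → ℝ) (hpos : ∀ t ω, 0 < M t ω)
    (hcont : ∀ ω, Continuous fun t => M t ω) (ω : Ω) :
    Continuous fun t => infP M t ω := by
  rw [Metric.continuous_iff]
  intro t₀ ε hε
  obtain ⟨δ, hδ, hδ'⟩ := Metric.continuous_iff.1 (hcont ω) t₀ (ε / 2) (half_pos hε)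
  refine ⟨δ, hδ, fun t ht => ?_⟩
  have key : ∀ u v : ℝ≥0, u ≤ v → (∀ s : ℝ≥0, u < s → s ≤ v → dist s t₀ < δ) →
      min (infP M u ω) (M t₀ ω - ε / 2) ≤ infP M v ω := by
    intro u v huv hball
    refine le_infP M fun s hs => ?_
    rcases le_or_gt s u with h | h
    · exact (min_le_left _ _).trans (infP_le M hpos h ω)
    · refine (min_le_right _ _).trans ?_
      have := hδ' s (hball s h hs)
      rw [Real.dist_eq, abs_lt] at this
      linarith [this.1]
  rw [Real.dist_eq, abs_lt]
  rcases le_total t t₀ with h | h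
  · have h1 : infP M t₀ ω ≤ infP M t ω := infP_anti M hpos ω h
    have h2 : min (infP M t ω) (M t₀ ω - ε / 2) ≤ infP M t₀ ω := by
      refine key t t₀ h fun s hs hs' => ?_
      rw [NNReal.dist_eq, abs_lt]
      rw [NNReal.dist_eq, abs_lt] at ht
      constructor <;> [skip; skip] <;>
        · push_cast
          have := NNReal.coe_lt_coe.2 hs
          have := NNReal.coe_le_coe.2 hs'
          have := NNReal.coe_le_coe.2 h
          push_cast at *
          linarith [ht.1, ht.2]
    have h3 : infP M t ω ≤ M t ω := infP_le M hpos le_rfl ω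
    have h4 := hδ' t ht
    rw [Real.dist_eq, abs_lt] at h4
    rcases min_cases (infP M t ω) (M t₀ ω - ε / 2) with ⟨heq, _⟩ | ⟨heq, _⟩ <;>
      rw [heq] at h2 <;> constructor <;> linarith
  · have h1 : infP M t ω ≤ infP M t₀ ω := infP_anti M hpos ω h
    have h2 : min (infP M t₀ ω) (M t₀ ω - ε / 2) ≤ infP M t ω := by
      refine key t₀ t h fun s hs hs' => ?_
      rw [NNReal.dist_eq, abs_lt]
      rw [NNReal.dist_eq, abs_lt] at ht
      constructor <;> [skip; skip] <;>
        · push_cast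
          have := NNReal.coe_lt_coe.2 hs
          have := NNReal.coe_le_coe.2 hs'
          have := NNReal.coe_le_coe.2 h
          push_cast at *
          linarith [ht.1, ht.2]
    have h3 : infP M t₀ ω ≤ M t₀ ω := infP_le M hpos le_rfl ω
    rcases min_cases (infP M t₀ ω) (M t₀ ω - ε / 2) with ⟨heq, _⟩ | ⟨heq, _⟩ <;>
      rw [heq] at h2 <;> constructor <;> linarith

lemma infP_eq_rat (M : ℝ≥0 → Ω → ℝ) (hpos : ∀ t ω, 0 < M t ω)
    (hcont : ∀ ω, Continuous fun t => M t ω) (t : ℝ≥0) (ω : Ω) :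
    infP M t ω = ⨅ q : {q : ℚ // 0 ≤ q ∧ (q : ℝ) ≤ (t : ℝ)}, M (Real.toNNReal q.1) ω := by
  have hne : Nonempty {q : ℚ // 0 ≤ q ∧ (q : ℝ) ≤ (t : ℝ)} :=
    ⟨⟨0, le_refl 0, by simpa using t.coe_nonneg⟩⟩
  have hbdd : BddBelow (Set.range fun q : {q : ℚ // 0 ≤ q ∧ (q : ℝ) ≤ (t : ℝ)} =>
      M (Real.toNNReal q.1) ω) := ⟨0, by rintro x ⟨q, rfl⟩; exact (hpos _ _).le⟩
  refine le_antisymm (le_ciInf fun q => infP_le M hpos ?_ ω) ?_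
  · rw [← NNReal.coe_le_coe, Real.coe_toNNReal _ (by exact_mod_cast q.2.1)]
    exact q.2.2
  · refine le_infP M fun s hs => le_of_forall_pos_le_add fun ε hε => ?_
    obtain ⟨δ, hδ, hδ'⟩ := Metric.continuous_iff.1 (hcont ω) s ε hε
    rcases eq_or_lt_of_le (zero_le : 0 ≤ s) with hs0 | hs0
    · have : (Real.toNNReal ((0 : ℚ) : ℝ)) = s := by
        simp [← hs0]
      calc ⨅ q : {q : ℚ // 0 ≤ q ∧ (q : ℝ) ≤ (t : ℝ)}, M (Real.toNNReal q.1) ω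
          ≤ M (Real.toNNReal ((0 : ℚ) : ℝ)) ω := ciInf_le hbdd ⟨0, le_refl 0, by simpa using t.coe_nonneg⟩
        _ = M s ω := by rw [this]
        _ ≤ M s ω + ε := by linarith
    · have hlo : (s : ℝ) - min δ s < (s : ℝ) := by
        have : (0 : ℝ) < min δ s := lt_min hδ (by exact_mod_cast hs0)
        linarith
      obtain ⟨q, hq1, hq2⟩ := exists_rat_btwn hlo
      have hq0 : (0 : ℝ) ≤ (q : ℝ) := by
        have : (0 : ℝ) ≤ (s : ℝ) - min δ s := by
          have : min δ (s : ℝ) ≤ (s : ℝ) := min_le_right _ _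
          linarith
        linarith
      have hqt : (q : ℝ) ≤ (t : ℝ) := le_trans hq2.le (by exact_mod_cast hs)
      have hmem : 0 ≤ q ∧ (q : ℝ) ≤ (t : ℝ) := ⟨by exact_mod_cast hq0, hqt⟩
      have hdist : dist (Real.toNNReal (q : ℝ)) s < δ := by
        rw [NNReal.dist_eq, Real.coe_toNNReal _ hq0, abs_lt]
        have : min δ (s : ℝ) ≤ δ := min_le_left _ _
        constructor <;> linarith
      have := hδ' _ hdist
      rw [Real.dist_eq, abs_lt] at this
      calc ⨅ q : {q : ℚ // 0 ≤ q ∧ (q : ℝ) ≤ (t : ℝ)}, M (Real.toNNReal q.1) ω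
          ≤ M (Real.toNNReal (q : ℝ)) ω := ciInf_le hbdd ⟨q, hmem⟩
        _ ≤ M s ω + ε := by linarith [this.2]

lemma infP_stronglyMeasurable {m0 : MeasurableSpace Ω} (ℱ : Filtration ℝ≥0 m0)
    (M : ℝ≥0 → Ω → ℝ) (hA : Adapted ℱ M) (hpos : ∀ t ω, 0 < M t ω)
    (hcont : ∀ ω, Continuous fun t => M t ω) (t : ℝ≥0) :
    StronglyMeasurable[ℱ t] fun ω => infP M t ω := by
  have heq : (fun ω => infP M t ω) =
      fun ω => ⨅ q : {q : ℚ // 0 ≤ q ∧ (q : ℝ) ≤ (t : ℝ)}, M (Real.toNNReal q.1) ω :=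
    funext fun ω => infP_eq_rat M hpos hcont t ω
  rw [heq]
  refine Measurable.stronglyMeasurable (Measurable.iInf fun q => ?_)
  have hle : Real.toNNReal q.1 ≤ t := by
    rw [← NNReal.coe_le_coe, Real.coe_toNNReal _ (by exact_mod_cast q.2.1)]
    exact q.2.2
  exact ((hA _).mono (ℱ.mono hle) le_rfl)

end Aux

/-- Corollary: `Y* = M/I - 1` is the smallest element of `E(M)`.
`Y*` belongs to `E(M)` (the set of nonnegative local submartingales whose martingale part
in the multiplicative decomposition is `M`), it satisfies `Y* ≤ Y` for every `Y ∈ E(M)`,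
and hence `Y*` vanishes more than any other element of `E(M)`. -/
theorem statement5 {Ω : Type*} {m0 : MeasurableSpace Ω} (μ : Measure Ω)
    [IsProbabilityMeasure μ] (ℱ : Filtration ℝ≥0 m0)
    (M : ℝ≥0 → Ω → ℝ) (hM : ContLocMart ℱ μ M) (hMpos : ∀ t ω, 0 < M t ω)
    (hM0 : ∀ ω, M 0 ω = 1) :
    ∀ Ystar : ℝ≥0 → Ω → ℝ, (Ystar = fun t ω => M t ω / infP M t ω - 1) →
      ((∀ t ω, 0 ≤ Ystar t ω) ∧ (∀ ω, Ystar 0 ω = 0) ∧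
        (∀ ω, Continuous fun t => Ystar t ω) ∧
        ∃ C, IncreasingProc ℱ C ∧ (∀ ω, C 0 ω = 1) ∧
          ∀ t ω, Ystar t ω = M t ω * C t ω - 1) ∧
      ∀ Y : ℝ≥0 → Ω → ℝ,
        ((∀ t ω, 0 ≤ Y t ω) ∧ (∀ ω, Y 0 ω = 0) ∧
          (∀ ω, Continuous fun t => Y t ω) ∧
          ∃ C, IncreasingProc ℱ C ∧ (∀ ω, C 0 ω = 1) ∧
            ∀ t ω, Y t ω = M t ω * C t ω - 1) →
        ∀ t ω, Ystar t ω ≤ Y t ω ∧ (Y t ω = 0 → Ystar t ω = 0) := by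
  intro Ystar hYstar
  obtain ⟨_, hA, hcont⟩ := hM
  have hIpos : ∀ t ω, 0 < infP M t ω := fun t ω => infP_pos M hMpos hcont t ω
  have hIleM : ∀ t ω, infP M t ω ≤ M t ω := fun t ω => infP_le M hMpos le_rfl ω
  have hnn : ∀ t ω, 0 ≤ Ystar t ω := by
    intro t ω
    rw [hYstar]
    have h1 : (1 : ℝ) ≤ M t ω / infP M t ω := (one_le_div (hIpos t ω)).2 (hIleM t ω)
    simp only []
    linarith
  subst hYstar
  constructor
  · refine ⟨hnn, ?_, ?_, ?_⟩
    · intro ω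
      simp only [infP_zero M hMpos, div_self (hMpos 0 ω).ne', sub_self]
    · intro ω
      exact ((hcont ω).div (infP_continuous M hMpos hcont ω)
        (fun t => (hIpos t ω).ne')).sub continuous_const
    · refine ⟨fun t ω => (infP M t ω)⁻¹, ⟨?_, ?_, ?_⟩, ?_, ?_⟩
      · intro t
        exact ((infP_stronglyMeasurable ℱ M hA hMpos hcont t).measurable.inv)
      · intro ω
        exact (infP_continuous M hMpos hcont ω).inv₀ fun t => (hIpos t ω).ne'
      · intro ω t₁ t₂ h
        exact inv_anti₀ (hIpos t₂ ω) (infP_anti M hMpos ω h)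
      · intro ω
        show (infP M 0 ω)⁻¹ = 1
        rw [infP_zero M hMpos, hM0]; norm_num
      · intro t ω
        show M t ω / infP M t ω - 1 = M t ω * (infP M t ω)⁻¹ - 1
        rw [div_eq_mul_inv]
  · rintro Y ⟨hYnn, _, _, C', ⟨_, _, hC'mono⟩, hC'0, hYeq⟩ t ω
    have hC'pos : 0 < C' t ω := by
      have h : C' 0 ω ≤ C' t ω := hC'mono ω (zero_le : 0 ≤ t)
      rw [hC'0 ω] at h; linarith
    have hkey : 1 / C' t ω ≤ infP M t ω := by
      refine le_infP M fun s hs => ?_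
      have h1 : 0 ≤ M s ω * C' s ω - 1 := by rw [← hYeq]; exact hYnn s ω
      have h2 : C' s ω ≤ C' t ω := hC'mono ω hs
      rw [div_le_iff₀ hC'pos]
      nlinarith [hMpos s ω]
    have hle : M t ω / infP M t ω - 1 ≤ Y t ω := by
      rw [hYeq]
      have h4 : M t ω ≤ M t ω * C' t ω * infP M t ω := by
        nlinarith [hMpos t ω, (div_le_iff₀ hC'pos).mp hkey]
      have h5 : M t ω / infP M t ω ≤ M t ω * C' t ω := by
        rw [div_le_iff₀ (hIpos t ω)]; exact h4
      linarith
    exact ⟨hle, fun hzero => le_antisymm (by rw [← hzero]; exact hle) (hnn t ω)⟩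
end

section
/- Let (U_t) be a continuous local martingale with U_0 = 0, and let M_t = exp(U_t − (1/2)⟨U⟩_t) be its stochastic exponential, with I_∞ = inf_{t≥0} M_t. Then E[log(1/I_∞)] < ∞ if and only if E[⟨U⟩_∞] < ∞; equivalently, since log(1/I_∞) = −inf_{t≥0}(U_t − (1/2)⟨U⟩_t), one has E[⟨U⟩_∞] < ∞ if and only if E[inf_{t≥0}(U_t − (1/2)⟨U⟩_t)] > −∞. -/
open MeasureTheory Filter Set Topology
open scoped NNReal ENNReal Classical

section Stmt14AuxSection

namespace Stmt14Aux


/-- Infimum of a continuous function on `ℝ≥0` equals infimum over a dense sequence. -/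
lemma iInf_dense (h : ℝ≥0 → ℝ) (hc : Continuous h) :
    ⨅ t, h t = ⨅ n : ℕ, h (TopologicalSpace.denseSeq ℝ≥0 n) := by
  set d := TopologicalSpace.denseSeq ℝ≥0 with hd_def
  have hd : DenseRange d := TopologicalSpace.denseRange_denseSeq ℝ≥0
  have hrange : Set.range (fun n : ℕ => h (d n)) = h '' Set.range d := by
    rw [← Set.range_comp]; rfl
  have hsub : Set.range (fun n : ℕ => h (d n)) ⊆ Set.range h := by
    rw [hrange]; rintro - ⟨t, -, rfl⟩; exact mem_range_self t
  have hcl : Set.range h ⊆ closure (Set.range (fun n : ℕ => h (d n))) := by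
    rw [hrange]
    rintro - ⟨t, rfl⟩
    have ht : t ∈ closure (Set.range d) := by
      rw [hd.closure_range]; trivial
    exact (image_closure_subset_closure_image hc) ⟨t, ht, rfl⟩
  by_cases hb : BddBelow (Set.range (fun n : ℕ => h (d n)))
  · obtain ⟨b, hbb⟩ := hb
    have hbS : BddBelow (Set.range h) := by
      refine ⟨b, fun x hx => ?_⟩
      have : b ∈ lowerBounds (closure (Set.range (fun n : ℕ => h (d n)))) := by
        rw [lowerBounds_closure]; exact hbb
      exact this (hcl hx)
    apply le_antisymm
    · exact le_ciInf fun n => ciInf_le hbS (d n)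
    · refine le_ciInf fun t => ?_
      have hlb : (⨅ n : ℕ, h (d n)) ∈
          lowerBounds (Set.range (fun n : ℕ => h (d n))) := by
        rintro - ⟨n, rfl⟩; exact ciInf_le ⟨b, hbb⟩ n
      have : (⨅ n : ℕ, h (d n)) ∈
          lowerBounds (closure (Set.range (fun n : ℕ => h (d n)))) := by
        rw [lowerBounds_closure]; exact hlb
      exact this (hcl (mem_range_self t))
  · have hbS : ¬ BddBelow (Set.range h) := fun hS => hb (hS.mono hsub)
    rw [Real.iInf_of_not_bddBelow hbS, Real.iInf_of_not_bddBelow hb]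

/-- Supremum of `ENNReal.ofReal` of a continuous function over dense sequence. -/
lemma iSup_dense (h : ℝ≥0 → ℝ) (hc : Continuous h) :
    ⨆ t, ENNReal.ofReal (h t) = ⨆ n : ℕ, ENNReal.ofReal (h (TopologicalSpace.denseSeq ℝ≥0 n)) := by
  set d := TopologicalSpace.denseSeq ℝ≥0 with hd_def
  have hd : DenseRange d := TopologicalSpace.denseRange_denseSeq ℝ≥0
  apply le_antisymm
  · refine iSup_le fun t => ?_
    have ht : t ∈ closure (Set.range d) := by rw [hd.closure_range]; trivial
    obtain ⟨u, hu_mem, hu_t⟩ := mem_closure_iff_seq_limit.1 ht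
    have htend : Tendsto (fun k => ENNReal.ofReal (h (u k))) atTop
        (𝓝 (ENNReal.ofReal (h t))) :=
      (ENNReal.continuous_ofReal.tendsto _).comp ((hc.tendsto t).comp hu_t)
    refine le_of_tendsto htend (Eventually.of_forall fun k => ?_)
    obtain ⟨n, hn⟩ := hu_mem k
    rw [← hn]
    exact le_iSup (fun n : ℕ => ENNReal.ofReal (h (d n))) n
  · exact iSup_le fun n => le_iSup_of_le (d n) le_rfl

lemma le_tsum_indicator (x : ℝ≥0∞) :
    x ≤ ∑' k : ℕ, Set.indicator {y : ℝ≥0∞ | (k : ℝ≥0∞) < y} (fun _ => 1) x := by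
  have key : ∀ N : ℕ, (∀ k : ℕ, k < N → (k : ℝ≥0∞) < x) →
      (N : ℝ≥0∞) ≤ ∑' k : ℕ, Set.indicator {y : ℝ≥0∞ | (k : ℝ≥0∞) < y} (fun _ => 1) x := by
    intro N hN
    calc (N : ℝ≥0∞) = ∑ k ∈ Finset.range N,
        Set.indicator {y : ℝ≥0∞ | (k : ℝ≥0∞) < y} (fun _ => 1) x := by
          rw [Finset.sum_congr rfl (fun k hk => ?_), Finset.sum_const, Finset.card_range,
            nsmul_eq_mul, mul_one]
          exact Set.indicator_of_mem (hN k (Finset.mem_range.1 hk)) (fun _ => (1:ℝ≥0∞))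
      _ ≤ _ := ENNReal.sum_le_tsum _
  rcases eq_or_ne x ⊤ with rfl | hx
  · by_contra hlt
    push_neg at hlt
    obtain ⟨N, hN⟩ := ENNReal.exists_nat_gt (ne_top_of_lt hlt)
    exact absurd (key N fun k _ => (by simp : ((k:ℕ) : ℝ≥0∞) < ⊤)) (not_le.2 hN)
  · rcases eq_or_ne x 0 with rfl | hx0
    · exact zero_le
    have hr : 0 < x.toReal := ENNReal.toReal_pos hx0 hx
    have hx' : x = ENNReal.ofReal x.toReal := (ENNReal.ofReal_toReal hx).symm
    set N := Nat.ceil x.toReal with hN_def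
    have h1 : x ≤ (N : ℝ≥0∞) := by
      rw [hx', ← ENNReal.ofReal_natCast]
      exact ENNReal.ofReal_le_ofReal (Nat.le_ceil _)
    refine h1.trans (key N fun k hk => ?_)
    have hkr : (k : ℝ) < x.toReal := Nat.lt_ceil.1 hk
    rw [hx', ← ENNReal.ofReal_natCast]
    exact ENNReal.ofReal_lt_ofReal_iff hr |>.2 hkr

lemma summable_aux : Summable (fun k : ℕ => ((k+1 : ℕ) : ℝ)⁻¹ ^ 2) := by
  have h : Summable (fun n : ℕ => ((n : ℝ)⁻¹) ^ 2) := by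
    simpa [one_div, inv_pow] using (Real.summable_one_div_nat_pow (p := 2)).2 one_lt_two
  exact h.comp_injective (add_left_injective 1)

lemma tsum_inv_sq_lt_top : (∑' k : ℕ, (((k+1 : ℕ) : ℝ≥0∞) ^ 2)⁻¹) < ⊤ := by
  have heq : ∀ k : ℕ, (((k+1 : ℕ) : ℝ≥0∞) ^ 2)⁻¹ = ENNReal.ofReal (((k+1 : ℕ) : ℝ)⁻¹ ^ 2) := by
    intro k
    rw [← ENNReal.ofReal_natCast, ← ENNReal.ofReal_pow (by positivity),
      ← ENNReal.ofReal_inv_of_pos (by positivity), inv_pow]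
  simp_rw [heq]
  rw [← ENNReal.ofReal_tsum_of_nonneg (fun k => by positivity) summable_aux]
  exact ENNReal.ofReal_lt_top

/-- If the tails of `W` decay like `C/k²`, its integral is finite. -/
lemma lintegral_lt_top_of_tail {Ω : Type*} {m0 : MeasurableSpace Ω} (μ : Measure Ω)
    [IsProbabilityMeasure μ] (W : Ω → ℝ≥0∞) (hW : Measurable W) (C : ℝ≥0∞) (hC : C ≠ ⊤)
    (hTail : ∀ k : ℕ, μ {ω | (((k+1 : ℕ)) : ℝ≥0∞) < W ω} ≤ C / ((k+1 : ℕ) : ℝ≥0∞) ^ 2) :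
    ∫⁻ ω, W ω ∂μ < ⊤ := by
  have hmeas : ∀ k : ℕ, MeasurableSet {ω | (k : ℝ≥0∞) < W ω} :=
    fun k => hW measurableSet_Ioi
  have step1 : ∫⁻ ω, W ω ∂μ ≤ ∑' k : ℕ, μ {ω | (k : ℝ≥0∞) < W ω} := by
    calc ∫⁻ ω, W ω ∂μ
        ≤ ∫⁻ ω, ∑' k : ℕ, Set.indicator {ω | (k : ℝ≥0∞) < W ω} (fun _ => 1) ω ∂μ := by
          refine lintegral_mono fun ω => ?_
          refine (le_tsum_indicator (W ω)).trans (le_of_eq ?_)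
          exact tsum_congr fun k => by simp [Set.indicator_apply]
      _ = ∑' k : ℕ, ∫⁻ ω, Set.indicator {ω | (k : ℝ≥0∞) < W ω} (fun _ => 1) ω ∂μ :=
          lintegral_tsum fun k => (measurable_one.indicator (hmeas k)).aemeasurable
      _ = ∑' k : ℕ, μ {ω | (k : ℝ≥0∞) < W ω} := by
          exact tsum_congr fun k => by simp [lintegral_indicator, hmeas k]
  have step2 : (∑' k : ℕ, μ {ω | (k : ℝ≥0∞) < W ω}) ≤ 1 + ∑' k : ℕ,
      C / ((k+1 : ℕ) : ℝ≥0∞) ^ 2 := by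
    rw [tsum_eq_zero_add' ENNReal.summable]
    refine add_le_add ?_ (ENNReal.tsum_le_tsum fun k => ?_)
    · simpa using measure_mono (Set.subset_univ _) |>.trans_eq (measure_univ)
    · exact_mod_cast hTail k
  have step3 : (∑' k : ℕ, C / ((k+1 : ℕ) : ℝ≥0∞) ^ 2) < ⊤ := by
    simp_rw [div_eq_mul_inv]
    rw [ENNReal.tsum_mul_left]
    exact ENNReal.mul_lt_top hC.lt_top tsum_inv_sq_lt_top
  calc ∫⁻ ω, W ω ∂μ ≤ 1 + ∑' k : ℕ, C / ((k+1 : ℕ) : ℝ≥0∞) ^ 2 := step1.trans step2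
    _ < ⊤ := by
        refine ENNReal.add_lt_top.2 ⟨ENNReal.one_lt_top, step3⟩

lemma iInf_exp_of_not_bdd (g : ℝ≥0 → ℝ) (hb : ¬ BddBelow (Set.range g)) :
    ⨅ t, Real.exp (g t) = 0 := by
  have hbdd : BddBelow (Set.range fun t => Real.exp (g t)) :=
    ⟨0, by rintro - ⟨t, rfl⟩; exact (Real.exp_pos _).le⟩
  apply le_antisymm
  · refine le_of_forall_pos_le_add fun ε hε => ?_
    obtain ⟨-, ⟨t, rfl⟩, ht⟩ := not_bddBelow_iff.1 hb (Real.log ε)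
    have : Real.exp (g t) < ε := by
      calc Real.exp (g t) < Real.exp (Real.log ε) := Real.exp_lt_exp.2 ht
        _ = ε := Real.exp_log hε
    exact (ciInf_le hbdd t).trans (by linarith)
  · exact le_ciInf fun t => (Real.exp_pos _).le

lemma log_inv_iInf (g : ℝ≥0 → ℝ) :
    Real.log (⨅ t, Real.exp (g t))⁻¹ = -(⨅ t, g t) := by
  by_cases hb : BddBelow (Set.range g)
  · have h1 : Real.exp (⨅ t, g t) = ⨅ t, Real.exp (g t) :=
      Monotone.map_ciInf_of_continuousAt (Real.continuous_exp.continuousAt)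
        Real.exp_monotone hb
    rw [← h1, ← Real.exp_neg, Real.log_exp]
  · rw [iInf_exp_of_not_bdd g hb, Real.iInf_of_not_bddBelow hb]
    simp

lemma pos_iff_bddBelow (g : ℝ≥0 → ℝ) :
    (0 < ⨅ t, Real.exp (g t)) ↔ BddBelow (Set.range g) := by
  constructor
  · intro h
    by_contra hb
    rw [iInf_exp_of_not_bdd g hb] at h
    exact lt_irrefl _ h
  · intro hb
    have h1 : Real.exp (⨅ t, g t) = ⨅ t, Real.exp (g t) :=
      Monotone.map_ciInf_of_continuousAt (Real.continuous_exp.continuousAt)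
        Real.exp_monotone hb
    rw [← h1]
    exact Real.exp_pos _

lemma martingale_integral_eq {Ω : Type*} {m0 : MeasurableSpace Ω} {μ : Measure Ω}
    [IsProbabilityMeasure μ] {ℱ : Filtration ℝ≥0 m0} {f : ℝ≥0 → Ω → ℝ}
    (hf : Martingale f ℱ μ) (t : ℝ≥0) :
    ∫ ω, f t ω ∂μ = ∫ ω, f 0 ω ∂μ := by
  have h := hf.condExp_ae_eq (zero_le : (0:ℝ≥0) ≤ t)
  calc ∫ ω, f t ω ∂μ = ∫ ω, (μ[f t | ℱ 0]) ω ∂μ := (integral_condExp (ℱ.le 0)).symm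
    _ = ∫ ω, f 0 ω ∂μ := integral_congr_ae h

/-- dyadic grid point `i / 2^j`. -/
noncomputable def dy (j i : ℕ) : ℝ≥0 := (i : ℝ≥0) * ((2:ℝ≥0) ^ j)⁻¹

lemma dy_mono (j : ℕ) : Monotone (dy j) := fun a b hab =>
  mul_le_mul_left (by exact_mod_cast hab) _

lemma dy_le (j i : ℕ) (hi : i ≤ j * 2 ^ j) : dy j i ≤ (j : ℝ≥0) := by
  have h2 : ((2:ℝ≥0) ^ j) ≠ 0 := by positivity
  calc dy j i ≤ ((j * 2 ^ j : ℕ) : ℝ≥0) * ((2:ℝ≥0) ^ j)⁻¹ :=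
      mul_le_mul_left (by exact_mod_cast hi) _
    _ = (j : ℝ≥0) := by
        push_cast
        rw [mul_assoc, mul_inv_cancel₀ h2, mul_one]

lemma dy_succ (j i : ℕ) : dy (j+1) (2*i) = dy j i := by
  have h2 : ((2:ℝ≥0) ^ j) ≠ 0 := by positivity
  rw [dy, dy]
  push_cast
  rw [pow_succ]
  field_simp


variable {Ω : Type*} {m0 : MeasurableSpace Ω}

lemma stp_eq (u : ℝ≥0 → Ω → ℝ) (τ : Ω → ℝ≥0) (t : ℝ≥0) :
    stoppedProcess u (fun ω => ((τ ω : ℝ≥0) : WithTop ℝ≥0)) t = fun ω => u (min t (τ ω)) ω := by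
  funext ω; simp only [stoppedProcess]; rw [← WithTop.coe_min]; rfl

lemma dirA (μ : Measure Ω) [IsProbabilityMeasure μ] (ℱ : Filtration ℝ≥0 m0)
    (U Q : ℝ≥0 → Ω → ℝ)
    (hUad : Adapted ℱ U) (hUct : ∀ ω, Continuous fun t => U t ω) (hU0 : ∀ ω, U 0 ω = 0)
    (hQad : Adapted ℱ Q) (hQct : ∀ ω, Continuous fun t => Q t ω)
    (hQmono : ∀ ω, Monotone fun t => Q t ω) (hQ0 : ∀ ω, Q 0 ω = 0)
    (τ : ℕ → Ω → ℝ≥0) (hτst : ∀ n, IsStoppingTime ℱ (fun ω => ((τ n ω : ℝ≥0) : WithTop ℝ≥0)))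
    (hτae : ∀ᵐ ω ∂μ, Tendsto (fun n => τ n ω) atTop atTop)
    (hτmart : ∀ n, Martingale (fun t ω => U (min t (τ n ω)) ω) ℱ μ)
    (hbdd : ∀ᵐ ω ∂μ, BddBelow (Set.range fun t => U t ω - Q t ω / 2))
    (hint : ∫⁻ ω, ENNReal.ofReal (-(⨅ t, (U t ω - Q t ω / 2))) ∂μ < ⊤) :
    ∫⁻ ω, (⨆ t, ENNReal.ofReal (Q t ω)) ∂μ < ⊤ := by
  have hQnn : ∀ t ω, 0 ≤ Q t ω := fun t ω => by
    have h := hQmono ω (zero_le : (0:ℝ≥0) ≤ t); simpa [hQ0 ω] using h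
  have hU_meas : ∀ t, Measurable (U t) := fun t => ((hUad t).mono (ℱ.le t) le_rfl)
  have hQ_meas : ∀ t, Measurable (Q t) := fun t => ((hQad t).mono (ℱ.le t) le_rfl)
  have hfct : ∀ ω, Continuous fun t => U t ω - Q t ω / 2 :=
    fun ω => (hUct ω).sub ((hQct ω).div_const 2)
  obtain ⟨g, hg_def⟩ : ∃ g : Ω → ℝ, g = fun ω => -(⨅ t, (U t ω - Q t ω / 2)) := ⟨_, rfl⟩
  have hg_meas : Measurable g := by
    have heq : g = fun ω => -(⨅ n : ℕ, (U (TopologicalSpace.denseSeq ℝ≥0 n) ω -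
        Q (TopologicalSpace.denseSeq ℝ≥0 n) ω / 2)) := by
      funext ω
      rw [hg_def]
      simp only [neg_inj]
      exact iInf_dense (fun t => U t ω - Q t ω / 2) (hfct ω)
    rw [heq]
    exact (Measurable.iInf fun n => (hU_meas _).sub ((hQ_meas _).div_const 2)).neg
  have hg_nonneg : ∀ ω, 0 ≤ g ω := by
    intro ω
    by_cases hb : BddBelow (Set.range fun t => U t ω - Q t ω / 2)
    · have h1 : (⨅ t, (U t ω - Q t ω / 2)) ≤ U 0 ω - Q 0 ω / 2 := ciInf_le hb 0
      rw [hU0 ω, hQ0 ω] at h1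
      rw [hg_def]
      simp only
      linarith
    · rw [hg_def]
      simp only [Real.iInf_of_not_bddBelow hb, neg_zero, le_refl]
  have hg_int : Integrable g μ := by
    refine ⟨hg_meas.aestronglyMeasurable, ?_⟩
    rw [hasFiniteIntegral_iff_norm]
    calc ∫⁻ ω, ENNReal.ofReal ‖g ω‖ ∂μ = ∫⁻ ω, ENNReal.ofReal (g ω) ∂μ := by
          refine lintegral_congr fun ω => by rw [Real.norm_eq_abs, abs_of_nonneg (hg_nonneg ω)]
      _ = ∫⁻ ω, ENNReal.ofReal (-(⨅ t, (U t ω - Q t ω / 2))) ∂μ := by rw [hg_def]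
      _ < ⊤ := hint
  -- pointwise inequality
  have hptwise : ∀ᵐ ω ∂μ, ∀ s : ℝ≥0, Q s ω ≤ 2 * U s ω + 2 * g ω := by
    filter_upwards [hbdd] with ω hb
    intro s
    have h1 : (⨅ t, (U t ω - Q t ω / 2)) ≤ U s ω - Q s ω / 2 := ciInf_le hb s
    have h2 : -(g ω) ≤ U s ω - Q s ω / 2 := by rw [hg_def]; simp only; linarith
    linarith
  -- stopped Q is measurable
  have hQst_sm : ∀ n t, StronglyMeasurable (fun ω => Q (min t (τ n ω)) ω) := by
    intro n t
    rw [← stp_eq]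
    exact (StronglyAdapted.stronglyMeasurable_stoppedProcess (fun t => (hQad t).stronglyMeasurable) hQct (hτst n) t)
  -- expectation of stopped U is zero
  have hEU : ∀ n t, ∫ ω, U (min t (τ n ω)) ω ∂μ = 0 := by
    intro n t
    have h := martingale_integral_eq (hτmart n) t
    have h0 : (fun ω => U (min 0 (τ n ω)) ω) = fun _ => (0 : ℝ) := by
      funext ω; rw [min_eq_left zero_le, hU0 ω]
    calc ∫ ω, U (min t (τ n ω)) ω ∂μ = ∫ ω, U (min 0 (τ n ω)) ω ∂μ := h
      _ = 0 := by rw [h0]; simp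
  -- integrability of stopped Q
  have hQst_int : ∀ n t, Integrable (fun ω => Q (min t (τ n ω)) ω) μ := by
    intro n t
    have hbd : Integrable (fun ω => 2 * |U (min t (τ n ω)) ω| + 2 * g ω) μ :=
      (((hτmart n).integrable t).abs.const_mul 2).add (hg_int.const_mul 2)
    refine Integrable.mono' hbd (hQst_sm n t).aestronglyMeasurable ?_
    filter_upwards [hptwise] with ω hω
    rw [Real.norm_eq_abs, abs_of_nonneg (hQnn _ ω)]
    have h1 := hω (min t (τ n ω))
    have h2 := le_abs_self (U (min t (τ n ω)) ω)
    linarith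
  -- integral bound for stopped Q
  have hInt_le : ∀ n t, ∫ ω, Q (min t (τ n ω)) ω ∂μ ≤ 2 * ∫ ω, g ω ∂μ := by
    intro n t
    have hsum_int : Integrable (fun ω => 2 * U (min t (τ n ω)) ω + 2 * g ω) μ :=
      (((hτmart n).integrable t).const_mul 2).add (hg_int.const_mul 2)
    have h1 : ∫ ω, Q (min t (τ n ω)) ω ∂μ ≤ ∫ ω, (2 * U (min t (τ n ω)) ω + 2 * g ω) ∂μ := by
      refine integral_mono_ae (hQst_int n t) hsum_int ?_
      filter_upwards [hptwise] with ω hω using hω _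
    rw [integral_add (((hτmart n).integrable t).const_mul 2) (hg_int.const_mul 2),
      integral_const_mul, integral_const_mul, hEU n t] at h1
    linarith
  -- lintegral bound at fixed time
  have hlim : ∀ t : ℝ≥0, ∫⁻ ω, ENNReal.ofReal (Q t ω) ∂μ ≤
      ENNReal.ofReal (2 * ∫ ω, g ω ∂μ) := by
    intro t
    have hconv : ∀ᵐ ω ∂μ, ENNReal.ofReal (Q t ω) =
        liminf (fun n => ENNReal.ofReal (Q (min t (τ n ω)) ω)) atTop := by
      filter_upwards [hτae] with ω hω
      have hev : (fun _ : ℕ => ENNReal.ofReal (Q t ω)) =ᶠ[atTop]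
          (fun n => ENNReal.ofReal (Q (min t (τ n ω)) ω)) := by
        filter_upwards [hω.eventually_ge_atTop t] with n hn
        rw [min_eq_left hn]
      have : Tendsto (fun n => ENNReal.ofReal (Q (min t (τ n ω)) ω)) atTop
          (𝓝 (ENNReal.ofReal (Q t ω))) := Tendsto.congr' hev tendsto_const_nhds
      exact this.liminf_eq.symm
    rw [lintegral_congr_ae hconv]
    refine (lintegral_liminf_le fun n =>
      (ENNReal.measurable_ofReal.comp (hQst_sm n t).measurable)).trans ?_
    have hterm : ∀ n : ℕ, ∫⁻ ω, ENNReal.ofReal (Q (min t (τ n ω)) ω) ∂μ ≤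
        ENNReal.ofReal (2 * ∫ ω, g ω ∂μ) := by
      intro n
      rw [← ofReal_integral_eq_lintegral_ofReal (hQst_int n t)
        (Eventually.of_forall fun ω => hQnn _ ω)]
      exact ENNReal.ofReal_le_ofReal (hInt_le n t)
    calc liminf (fun n => ∫⁻ ω, ENNReal.ofReal (Q (min t (τ n ω)) ω) ∂μ) atTop
        ≤ liminf (fun _ : ℕ => ENNReal.ofReal (2 * ∫ ω, g ω ∂μ)) atTop :=
          liminf_le_liminf (Eventually.of_forall hterm)
      _ = ENNReal.ofReal (2 * ∫ ω, g ω ∂μ) := liminf_const _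
  -- supremum over ℕ
  have hsup_nat : ∀ ω, (⨆ t, ENNReal.ofReal (Q t ω)) = ⨆ k : ℕ, ENNReal.ofReal (Q (k : ℝ≥0) ω) := by
    intro ω
    apply le_antisymm
    · refine iSup_le fun t => ?_
      obtain ⟨k, hk⟩ := exists_nat_ge t
      exact le_iSup_of_le k (ENNReal.ofReal_le_ofReal (hQmono ω hk))
    · exact iSup_le fun k => le_iSup_of_le ((k : ℝ≥0)) le_rfl
  calc ∫⁻ ω, (⨆ t, ENNReal.ofReal (Q t ω)) ∂μ
      = ∫⁻ ω, (⨆ k : ℕ, ENNReal.ofReal (Q (k : ℝ≥0) ω)) ∂μ := lintegral_congr hsup_nat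
    _ = ⨆ k : ℕ, ∫⁻ ω, ENNReal.ofReal (Q (k : ℝ≥0) ω) ∂μ := by
        refine lintegral_iSup (fun k => ENNReal.measurable_ofReal.comp (hQ_meas _)) ?_
        intro a b hab ω
        exact ENNReal.ofReal_le_ofReal (hQmono ω (by exact_mod_cast hab))
    _ ≤ ENNReal.ofReal (2 * ∫ ω, g ω ∂μ) := iSup_le fun k => hlim _
    _ < ⊤ := ENNReal.ofReal_lt_top



lemma dirB (μ : Measure Ω) [IsProbabilityMeasure μ] (ℱ : Filtration ℝ≥0 m0)
    (U Q : ℝ≥0 → Ω → ℝ)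
    (hUad : Adapted ℱ U) (hUct : ∀ ω, Continuous fun t => U t ω) (hU0 : ∀ ω, U 0 ω = 0)
    (hQad : Adapted ℱ Q) (hQct : ∀ ω, Continuous fun t => Q t ω)
    (hQmono : ∀ ω, Monotone fun t => Q t ω) (hQ0 : ∀ ω, Q 0 ω = 0)
    (σ : ℕ → Ω → ℝ≥0) (hσst : ∀ n, IsStoppingTime ℱ (fun ω => ((σ n ω : ℝ≥0) : WithTop ℝ≥0)))
    (hσae : ∀ᵐ ω ∂μ, Tendsto (fun n => σ n ω) atTop atTop)
    (hσmart : ∀ n, Martingale (fun t ω => U (min t (σ n ω)) ω ^ 2 - Q (min t (σ n ω)) ω) ℱ μ)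
    (hc : ∫⁻ ω, (⨆ t, ENNReal.ofReal (Q t ω)) ∂μ < ⊤) :
    (∀ᵐ ω ∂μ, BddBelow (Set.range fun t => U t ω - Q t ω / 2)) ∧
      ∫⁻ ω, ENNReal.ofReal (-(⨅ t, (U t ω - Q t ω / 2))) ∂μ < ⊤ := by
  have hQnn : ∀ t ω, 0 ≤ Q t ω := fun t ω => by
    have h := hQmono ω (zero_le : (0:ℝ≥0) ≤ t); simpa [hQ0 ω] using h
  have hU_meas : ∀ t, Measurable (U t) := fun t => ((hUad t).mono (ℱ.le t) le_rfl)
  have hQ_meas : ∀ t, Measurable (Q t) := fun t => ((hQad t).mono (ℱ.le t) le_rfl)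
  -- the sup process QS and its toReal version R
  have hsup_nat : ∀ ω, (⨆ t, ENNReal.ofReal (Q t ω)) = ⨆ k : ℕ, ENNReal.ofReal (Q (k : ℝ≥0) ω) := by
    intro ω
    apply le_antisymm
    · refine iSup_le fun t => ?_
      obtain ⟨k, hk⟩ := exists_nat_ge t
      exact le_iSup_of_le k (ENNReal.ofReal_le_ofReal (hQmono ω hk))
    · exact iSup_le fun k => le_iSup_of_le ((k : ℝ≥0)) le_rfl
  have hQS_meas : Measurable (fun ω => ⨆ t, ENNReal.ofReal (Q t ω)) := by
    have : (fun ω => ⨆ t, ENNReal.ofReal (Q t ω))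
        = fun ω => ⨆ k : ℕ, ENNReal.ofReal (Q (k : ℝ≥0) ω) := funext hsup_nat
    rw [this]
    exact Measurable.iSup fun k => ENNReal.measurable_ofReal.comp (hQ_meas _)
  have hQS_fin : ∀ᵐ ω ∂μ, (⨆ t, ENNReal.ofReal (Q t ω)) < ⊤ := ae_lt_top hQS_meas hc.ne
  obtain ⟨R, hR_def⟩ : ∃ R : Ω → ℝ, R = fun ω => (⨆ t, ENNReal.ofReal (Q t ω)).toReal := ⟨_, rfl⟩
  have hR_meas : Measurable R := by rw [hR_def]; exact hQS_meas.ennreal_toReal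
  have hR_nonneg : ∀ ω, 0 ≤ R ω := fun ω => by rw [hR_def]; exact ENNReal.toReal_nonneg
  have hQleR : ∀ᵐ ω ∂μ, ∀ t, Q t ω ≤ R ω := by
    filter_upwards [hQS_fin] with ω hω t
    have h1 : ENNReal.ofReal (Q t ω) ≤ ⨆ t, ENNReal.ofReal (Q t ω) := le_iSup (fun u => ENNReal.ofReal (Q u ω)) t
    have h2 := ENNReal.toReal_mono hω.ne h1
    rw [ENNReal.toReal_ofReal (hQnn t ω)] at h2
    rw [hR_def]
    exact h2
  have hR_int : Integrable R μ := by
    refine ⟨hR_meas.aestronglyMeasurable, ?_⟩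
    rw [hasFiniteIntegral_iff_norm]
    have : ∫⁻ ω, ENNReal.ofReal ‖R ω‖ ∂μ = ∫⁻ ω, (⨆ t, ENNReal.ofReal (Q t ω)) ∂μ := by
      refine lintegral_congr_ae ?_
      filter_upwards [hQS_fin] with ω hω
      rw [Real.norm_eq_abs, abs_of_nonneg (hR_nonneg ω), hR_def, ENNReal.ofReal_toReal hω.ne]
    rw [this]; exact hc
  obtain ⟨cR, hcR_def⟩ : ∃ cR : ℝ, cR = ∫ ω, R ω ∂μ := ⟨_, rfl⟩
  -- stopped processes
  have hUst_sm : ∀ n (t : ℝ≥0), StronglyMeasurable (fun ω => U (min t (σ n ω)) ω) :=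
    fun n t => by rw [← stp_eq]; exact StronglyAdapted.stronglyMeasurable_stoppedProcess (fun t => (hUad t).stronglyMeasurable) hUct (hσst n) t
  have hQst_sm : ∀ n (t : ℝ≥0), StronglyMeasurable (fun ω => Q (min t (σ n ω)) ω) :=
    fun n t => by rw [← stp_eq]; exact StronglyAdapted.stronglyMeasurable_stoppedProcess (fun t => (hQad t).stronglyMeasurable) hQct (hσst n) t
  have hQst_int : ∀ n (t : ℝ≥0), Integrable (fun ω => Q (min t (σ n ω)) ω) μ := by
    intro n t
    refine Integrable.mono' hR_int (hQst_sm n t).aestronglyMeasurable ?_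
    filter_upwards [hQleR] with ω hω
    rw [Real.norm_eq_abs, abs_of_nonneg (hQnn _ ω)]
    exact hω _
  have hU2_int : ∀ n (t : ℝ≥0), Integrable (fun ω => U (min t (σ n ω)) ω ^ 2) μ := by
    intro n t
    have heq : (fun ω => U (min t (σ n ω)) ω ^ 2) = fun ω =>
        (U (min t (σ n ω)) ω ^ 2 - Q (min t (σ n ω)) ω) + Q (min t (σ n ω)) ω := by
      funext ω; ring
    rw [heq]
    exact ((hσmart n).integrable t).add (hQst_int n t)
  have hEQ2 : ∀ n (t : ℝ≥0), ∫ ω, U (min t (σ n ω)) ω ^ 2 ∂μ ≤ cR := by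
    intro n t
    have hEB : ∫ ω, (U (min t (σ n ω)) ω ^ 2 - Q (min t (σ n ω)) ω) ∂μ
        = ∫ ω, (U (min 0 (σ n ω)) ω ^ 2 - Q (min 0 (σ n ω)) ω) ∂μ :=
      martingale_integral_eq (hσmart n) t
    have h0 : (fun ω => U (min 0 (σ n ω)) ω ^ 2 - Q (min 0 (σ n ω)) ω) = fun _ => (0:ℝ) := by
      funext ω
      rw [min_eq_left zero_le, hU0 ω, hQ0 ω]
      ring
    rw [integral_sub (hU2_int n t) (hQst_int n t), h0] at hEB
    simp only [integral_zero] at hEB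
    have h2 : ∫ ω, Q (min t (σ n ω)) ω ∂μ ≤ cR := by
      rw [hcR_def]
      refine integral_mono_ae (hQst_int n t) hR_int ?_
      filter_upwards [hQleR] with ω hω using hω _
    linarith
  have hs_mono : ∀ j, Monotone (dy j) := dy_mono
  have hs_le : ∀ j i, i ≤ j * 2 ^ j → dy j i ≤ (j : ℝ≥0) := dy_le
  -- submartingale property of the stopped squared process along the grid
  have hsubm : ∀ n j, Submartingale (fun i ω => U (min (dy j i) (σ n ω)) ω ^ 2)
      (⟨fun i => ℱ (dy j i), fun a b hab => ℱ.mono (hs_mono j hab), fun i => ℱ.le _⟩ :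
        Filtration ℕ m0) μ := by
    intro n j
    refine ⟨fun i => ?_, fun i k hik => ?_, fun i => hU2_int n (dy j i)⟩
    · -- adapted
      show StronglyMeasurable[ℱ (dy j i)] (fun ω => U (min (dy j i) (σ n ω)) ω ^ 2)
      have h := (StronglyAdapted.stoppedProcess (fun t => (hUad t).stronglyMeasurable) hUct (hσst n)) (dy j i)
      rw [stp_eq] at h
      have heq : (fun ω => U (min (dy j i) (σ n ω)) ω ^ 2) = fun ω =>
          U (min (dy j i) (σ n ω)) ω * U (min (dy j i) (σ n ω)) ω := by
        funext ω; rw [pow_two]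
      rw [heq]; exact h.mul h
    · -- submartingale inequality
      show (fun ω => U (min (dy j i) (σ n ω)) ω ^ 2) ≤ᵐ[μ]
        μ[(fun ω => U (min (dy j k) (σ n ω)) ω ^ 2)|ℱ (dy j i)]
      have hsplit : (fun ω => U (min (dy j k) (σ n ω)) ω ^ 2) = (fun ω =>
          (U (min (dy j k) (σ n ω)) ω ^ 2 - Q (min (dy j k) (σ n ω)) ω)) + (fun ω =>
          Q (min (dy j k) (σ n ω)) ω) := by
        funext ω; simp only [Pi.add_apply]; ring
      have hadd : μ[(fun ω => U (min (dy j k) (σ n ω)) ω ^ 2)|ℱ (dy j i)] =ᵐ[μ]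
          μ[(fun ω => U (min (dy j k) (σ n ω)) ω ^ 2 - Q (min (dy j k) (σ n ω)) ω)|ℱ (dy j i)]
            + μ[(fun ω => Q (min (dy j k) (σ n ω)) ω)|ℱ (dy j i)] := by
        rw [hsplit]
        exact condExp_add ((hσmart n).integrable (dy j k)) (hQst_int n (dy j k)) _
      have hmartpart : μ[(fun ω => U (min (dy j k) (σ n ω)) ω ^ 2 -
          Q (min (dy j k) (σ n ω)) ω)|ℱ (dy j i)] =ᵐ[μ]
          (fun ω => U (min (dy j i) (σ n ω)) ω ^ 2 - Q (min (dy j i) (σ n ω)) ω) :=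
        (hσmart n).condExp_ae_eq (hs_mono j hik)
      have hmono : μ[(fun ω => Q (min (dy j i) (σ n ω)) ω)|ℱ (dy j i)] ≤ᵐ[μ]
          μ[(fun ω => Q (min (dy j k) (σ n ω)) ω)|ℱ (dy j i)] :=
        condExp_mono (hQst_int n (dy j i)) (hQst_int n (dy j k))
          (Eventually.of_forall fun ω => hQmono ω (min_le_min (hs_mono j hik) le_rfl))
      have hfix : μ[(fun ω => Q (min (dy j i) (σ n ω)) ω)|ℱ (dy j i)]
          = fun ω => Q (min (dy j i) (σ n ω)) ω :=
        condExp_of_stronglyMeasurable (ℱ.le (dy j i))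
          (by have h := (StronglyAdapted.stoppedProcess (fun t => (hQad t).stronglyMeasurable) hQct (hσst n)) (dy j i); rw [stp_eq] at h; exact h) (hQst_int n (dy j i))
      filter_upwards [hadd, hmartpart, hmono] with ω h1 h2 h3
      have h4 : Q (min (dy j i) (σ n ω)) ω ≤
          (μ[(fun ω => Q (min (dy j k) (σ n ω)) ω)|ℱ (dy j i)]) ω := by
        have := congrFun hfix ω
        rw [← this]
        exact h3
      rw [h1, Pi.add_apply, h2]
      linarith
  -- the maximal event bound
  have hE_bound : ∀ n j k : ℕ, μ {ω | ((((k+1 : ℕ) : ℝ≥0) ^ 2 : ℝ≥0) : ℝ) ≤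
      (Finset.range (j * 2 ^ j + 1)).sup' Finset.nonempty_range_add_one
        (fun i => U (min (dy j i) (σ n ω)) ω ^ 2)} ≤
      ENNReal.ofReal cR / ((k+1 : ℕ) : ℝ≥0∞) ^ 2 := by
    intro n j k
    have hnn : (0 : ℕ → Ω → ℝ) ≤ fun i ω => U (min (dy j i) (σ n ω)) ω ^ 2 :=
      fun i ω => sq_nonneg _
    have hmax := maximal_ineq (hsubm n j) hnn (ε := ((k+1 : ℕ) : ℝ≥0) ^ 2) (j * 2 ^ j)
    have hsetint : ∫ ω in {ω | ((((k+1 : ℕ) : ℝ≥0) ^ 2 : ℝ≥0) : ℝ) ≤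
        (Finset.range (j * 2 ^ j + 1)).sup' Finset.nonempty_range_add_one
          (fun i => U (min (dy j i) (σ n ω)) ω ^ 2)},
        U (min (dy j (j * 2 ^ j)) (σ n ω)) ω ^ 2 ∂μ ≤ cR := by
      refine (setIntegral_le_integral (hU2_int n (dy j (j * 2 ^ j)))
        (Eventually.of_forall fun ω => sq_nonneg _)).trans (hEQ2 n (dy j (j * 2 ^ j)))
    have h1 : (((k+1 : ℕ) : ℝ≥0) ^ 2) • μ {ω | ((((k+1 : ℕ) : ℝ≥0) ^ 2 : ℝ≥0) : ℝ) ≤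
        (Finset.range (j * 2 ^ j + 1)).sup' Finset.nonempty_range_add_one
          (fun i => U (min (dy j i) (σ n ω)) ω ^ 2)} ≤ ENNReal.ofReal cR :=
      hmax.trans (ENNReal.ofReal_le_ofReal hsetint)
    rw [ENNReal.smul_def, smul_eq_mul] at h1
    rw [ENNReal.le_div_iff_mul_le (Or.inl (by positivity)) (Or.inl (by simp)), mul_comm]
    have hcast : (((k+1 : ℕ) : ℝ≥0∞)) ^ 2 = ((((k+1 : ℕ) : ℝ≥0) ^ 2 : ℝ≥0) : ℝ≥0∞) := by
      push_cast; ring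
    rw [hcast]
    exact h1
  -- events where the sup of |U| over the grid exceeds k+1
  set A : ℕ → ℕ → Set Ω := fun k j =>
      ⋃ i ∈ Finset.range (j * 2 ^ j + 1), {ω | ((k+1 : ℕ) : ℝ) < |U (dy j i) ω|} with hA_def
  have hA_mono : ∀ k, Monotone fun j => A k j := by
    intro k
    refine monotone_nat_of_le_succ fun j => ?_
    intro ω hω
    simp only [hA_def, Set.mem_iUnion, Finset.mem_range, exists_prop] at hω ⊢
    obtain ⟨i, hi, hUi⟩ := hω
    refine ⟨2 * i, ?_, ?_⟩
    · have hi' : i ≤ j * 2 ^ j := Nat.lt_succ_iff.mp hi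
      have h2 : 2 * i ≤ (j+1) * 2 ^ (j+1) := by
        calc 2 * i ≤ 2 * (j * 2 ^ j) := by omega
          _ = j * 2 ^ (j+1) := by rw [pow_succ]; ring
          _ ≤ (j+1) * 2 ^ (j+1) := Nat.mul_le_mul_right _ (by omega)
      omega
    · rw [dy_succ]; exact hUi
  -- each A k j has small measure
  have hAj_bound : ∀ k j, μ (A k j) ≤ ENNReal.ofReal cR / ((k+1 : ℕ) : ℝ≥0∞) ^ 2 := by
    intro k j
    have hσ0 : Tendsto (fun n => μ {ω | σ n ω < (j : ℝ≥0)}) atTop (𝓝 0) := by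
      have hms : ∀ n, MeasurableSet {ω | σ n ω < (j : ℝ≥0)} :=
        fun n => ℱ.le (j : ℝ≥0) _ (by have h := (hσst n).measurableSet_lt (j : ℝ≥0); simpa only [WithTop.coe_lt_coe] using h)
      have heq : ∀ n, μ {ω | σ n ω < (j : ℝ≥0)} =
          ∫⁻ ω, Set.indicator {ω | σ n ω < (j : ℝ≥0)} (fun _ => (1:ℝ≥0∞)) ω ∂μ := by
        intro n
        rw [lintegral_indicator (hms n)]
        simp
      simp_rw [heq]
      have h00 : (0 : ℝ≥0∞) = ∫⁻ _, (0:ℝ≥0∞) ∂μ := by simp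
      rw [h00]
      refine tendsto_lintegral_of_dominated_convergence (fun _ => (1:ℝ≥0∞))
        (fun n => measurable_one.indicator (hms n))
        (fun n => Eventually.of_forall fun ω => ?_) (by simp) ?_
      · by_cases h : ω ∈ {ω | σ n ω < (j : ℝ≥0)} <;> simp [Set.indicator_apply, h]
      · filter_upwards [hσae] with ω hω
        have hev : (fun _ : ℕ => (0:ℝ≥0∞)) =ᶠ[atTop]
            (fun n => Set.indicator {ω | σ n ω < (j : ℝ≥0)} (fun _ => (1:ℝ≥0∞)) ω) := by
          filter_upwards [hω.eventually_ge_atTop (j : ℝ≥0)] with n hn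
          exact (Set.indicator_of_notMem
            (by simp only [Set.mem_setOf_eq, not_lt]; exact hn) _).symm
        exact Tendsto.congr' hev tendsto_const_nhds
    have hineq : ∀ n, μ (A k j) ≤ ENNReal.ofReal cR / ((k+1 : ℕ) : ℝ≥0∞) ^ 2
        + μ {ω | σ n ω < (j : ℝ≥0)} := by
      intro n
      have hsub : A k j ⊆ {ω | ((((k+1 : ℕ) : ℝ≥0) ^ 2 : ℝ≥0) : ℝ) ≤
          (Finset.range (j * 2 ^ j + 1)).sup' Finset.nonempty_range_add_one
            (fun i => U (min (dy j i) (σ n ω)) ω ^ 2)} ∪ {ω | σ n ω < (j : ℝ≥0)} := by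
        intro ω hω
        by_cases hσn : σ n ω < (j : ℝ≥0)
        · exact Or.inr hσn
        · left
          simp only [hA_def, Set.mem_iUnion, Finset.mem_range, exists_prop] at hω
          obtain ⟨i, hi, hUi⟩ := hω
          have hsle : dy j i ≤ σ n ω := (dy_le j i (Nat.lt_succ_iff.mp hi)).trans (not_lt.1 hσn)
          have hmineq : min (dy j i) (σ n ω) = dy j i := min_eq_left hsle
          show ((((k+1 : ℕ) : ℝ≥0) ^ 2 : ℝ≥0) : ℝ) ≤ _
          refine le_trans ?_ (Finset.le_sup'
            (fun i => U (min (dy j i) (σ n ω)) ω ^ 2) (Finset.mem_range.2 hi))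
          rw [hmineq]
          calc ((((k+1 : ℕ) : ℝ≥0) ^ 2 : ℝ≥0) : ℝ) = ((k+1 : ℕ) : ℝ) ^ 2 := by push_cast; ring
            _ ≤ |U (dy j i) ω| ^ 2 := pow_le_pow_left₀ (by positivity) hUi.le 2
            _ = U (dy j i) ω ^ 2 := sq_abs _
      calc μ (A k j) ≤ μ ({ω | ((((k+1 : ℕ) : ℝ≥0) ^ 2 : ℝ≥0) : ℝ) ≤
            (Finset.range (j * 2 ^ j + 1)).sup' Finset.nonempty_range_add_one
              (fun i => U (min (dy j i) (σ n ω)) ω ^ 2)} ∪ {ω | σ n ω < (j : ℝ≥0)}) :=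
            measure_mono hsub
        _ ≤ μ {ω | ((((k+1 : ℕ) : ℝ≥0) ^ 2 : ℝ≥0) : ℝ) ≤
            (Finset.range (j * 2 ^ j + 1)).sup' Finset.nonempty_range_add_one
              (fun i => U (min (dy j i) (σ n ω)) ω ^ 2)} + μ {ω | σ n ω < (j : ℝ≥0)} :=
            measure_union_le _ _
        _ ≤ ENNReal.ofReal cR / ((k+1 : ℕ) : ℝ≥0∞) ^ 2 + μ {ω | σ n ω < (j : ℝ≥0)} :=
            add_le_add_left (hE_bound n j k) _
    have hlim : Tendsto (fun n => ENNReal.ofReal cR / ((k+1 : ℕ) : ℝ≥0∞) ^ 2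
        + μ {ω | σ n ω < (j : ℝ≥0)}) atTop
        (𝓝 (ENNReal.ofReal cR / ((k+1 : ℕ) : ℝ≥0∞) ^ 2 + 0)) :=
      Tendsto.const_add _ hσ0
    have hfin := ge_of_tendsto hlim (Eventually.of_forall hineq)
    rwa [add_zero] at hfin
  -- the running sup of |U|
  obtain ⟨W, hW_def⟩ : ∃ W : Ω → ℝ≥0∞, W = fun ω => ⨆ t, ENNReal.ofReal |U t ω| := ⟨_, rfl⟩
  have hW_meas : Measurable W := by
    have hWd : W = fun ω => ⨆ n : ℕ, ENNReal.ofReal |U (TopologicalSpace.denseSeq ℝ≥0 n) ω| := by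
      funext ω
      rw [hW_def]
      exact iSup_dense (fun t => |U t ω|) (hUct ω).abs
    rw [hWd]
    exact Measurable.iSup fun n => ENNReal.measurable_ofReal.comp (hU_meas _).abs
  have hWtail : ∀ k : ℕ, μ {ω | ((k+1 : ℕ) : ℝ≥0∞) < W ω} ≤
      ENNReal.ofReal cR / ((k+1 : ℕ) : ℝ≥0∞) ^ 2 := by
    intro k
    have hcover : {ω | ((k+1 : ℕ) : ℝ≥0∞) < W ω} ⊆ ⋃ j, A k j := by
      intro ω hω
      rw [Set.mem_setOf_eq, hW_def, lt_iSup_iff] at hω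
      obtain ⟨t, ht⟩ := hω
      have ht' : ((k+1 : ℕ) : ℝ) < |U t ω| := by
        rw [← ENNReal.ofReal_natCast,
          ENNReal.ofReal_lt_ofReal_iff_of_nonneg (by positivity)] at ht
        exact ht
      have h2pos : ∀ j : ℕ, (0:ℝ) < 2 ^ j := fun j => by positivity
      have htends : Tendsto (fun j : ℕ => dy j ⌊(t:ℝ) * 2 ^ j⌋₊) atTop (𝓝 t) := by
        rw [← NNReal.tendsto_coe]
        have hval : ∀ j : ℕ, ((dy j ⌊(t:ℝ) * 2 ^ j⌋₊ : ℝ≥0) : ℝ)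
            = (⌊(t:ℝ) * 2 ^ j⌋₊ : ℝ) / 2 ^ j := by
          intro j
          rw [dy]
          push_cast
          rw [div_eq_mul_inv]
        simp_rw [hval]
        have hub : ∀ j : ℕ, (⌊(t:ℝ) * 2 ^ j⌋₊ : ℝ) / 2 ^ j ≤ (t:ℝ) := fun j => by
          rw [div_le_iff₀ (h2pos j)]
          exact Nat.floor_le (by positivity)
        have hlb : ∀ j : ℕ, (t:ℝ) - ((1:ℝ)/2) ^ j ≤ (⌊(t:ℝ) * 2 ^ j⌋₊ : ℝ) / 2 ^ j := fun j => by
          rw [le_div_iff₀ (h2pos j)]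
          have hpow : ((1:ℝ)/2) ^ j * 2 ^ j = 1 := by
            rw [one_div, inv_pow]
            exact inv_mul_cancel₀ (h2pos j).ne'
          nlinarith [Nat.sub_one_lt_floor ((t:ℝ) * 2 ^ j)]
        refine tendsto_of_tendsto_of_tendsto_of_le_of_le ?_ tendsto_const_nhds hlb hub
        have hhalf : Tendsto (fun j : ℕ => ((1:ℝ)/2) ^ j) atTop (𝓝 0) :=
          tendsto_pow_atTop_nhds_zero_of_lt_one (by norm_num) (by norm_num)
        have := (tendsto_const_nhds (x := (t:ℝ))).sub hhalf
        simpa using this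
      have hUtend : Tendsto (fun j : ℕ => |U (dy j ⌊(t:ℝ) * 2 ^ j⌋₊) ω|) atTop (𝓝 |U t ω|) :=
        ((hUct ω).abs.tendsto t).comp htends
      have hev1 : ∀ᶠ j : ℕ in atTop, ((k+1 : ℕ) : ℝ) < |U (dy j ⌊(t:ℝ) * 2 ^ j⌋₊) ω| :=
        hUtend.eventually_const_lt ht'
      have hev2 : ∀ᶠ j : ℕ in atTop, ⌊(t:ℝ) * 2 ^ j⌋₊ ≤ j * 2 ^ j := by
        filter_upwards [eventually_ge_atTop ⌈(t:ℝ)⌉₊] with j hj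
        have htj : (t:ℝ) ≤ (j:ℝ) := le_trans (Nat.le_ceil _) (by exact_mod_cast hj)
        refine Nat.floor_le_of_le ?_
        calc (t:ℝ) * 2 ^ j ≤ (j:ℝ) * 2 ^ j := by nlinarith [h2pos j]
          _ = ((j * 2 ^ j : ℕ) : ℝ) := by push_cast; ring
      obtain ⟨j, hj1, hj2⟩ := (hev1.and hev2).exists
      refine Set.mem_iUnion.2 ⟨j, ?_⟩
      simp only [hA_def, Set.mem_iUnion, Finset.mem_range, exists_prop]
      exact ⟨_, Nat.lt_succ_of_le hj2, hj1⟩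
    calc μ {ω | ((k+1 : ℕ) : ℝ≥0∞) < W ω} ≤ μ (⋃ j, A k j) := measure_mono hcover
      _ = ⨆ j, μ (A k j) := (hA_mono k).directed_le.measure_iUnion
      _ ≤ ENNReal.ofReal cR / ((k+1 : ℕ) : ℝ≥0∞) ^ 2 := iSup_le fun j => hAj_bound k j
  have hW_fin : ∫⁻ ω, W ω ∂μ < ⊤ :=
    lintegral_lt_top_of_tail μ W hW_meas (ENNReal.ofReal cR) ENNReal.ofReal_ne_top hWtail
  have hW_ae : ∀ᵐ ω ∂μ, W ω < ⊤ := ae_lt_top hW_meas hW_fin.ne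
  have hUbd : ∀ᵐ ω ∂μ, ∀ t, |U t ω| ≤ (W ω).toReal := by
    filter_upwards [hW_ae] with ω hω t
    have h1 : ENNReal.ofReal |U t ω| ≤ W ω := by
      rw [hW_def]; exact le_iSup (fun u => ENNReal.ofReal |U u ω|) t
    have h2 := ENNReal.toReal_mono hω.ne h1
    rwa [ENNReal.toReal_ofReal (abs_nonneg _)] at h2
  constructor
  · filter_upwards [hUbd, hQleR] with ω hWω hQω
    refine ⟨-((W ω).toReal + R ω / 2), ?_⟩
    rintro x ⟨t, rfl⟩
    have h3 := abs_le.1 (hWω t)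
    have h2 := hQω t
    have h5 := hQnn t ω
    simp only
    linarith [h3.1]
  · have hptw : ∀ᵐ ω ∂μ, ENNReal.ofReal (-(⨅ t, (U t ω - Q t ω / 2))) ≤
        W ω + (⨆ t, ENNReal.ofReal (Q t ω)) := by
      filter_upwards [hUbd, hQleR, hW_ae, hQS_fin] with ω hWω hQω hWfin hQSfin
      have hlb : ∀ t : ℝ≥0, -((W ω).toReal + R ω) ≤ U t ω - Q t ω / 2 := by
        intro t
        have h3 := abs_le.1 (hWω t)
        have h2 := hQω t
        have h4 := hR_nonneg ω
        have h5 := hQnn t ω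
        linarith [h3.1]
      have hinf : -((W ω).toReal + R ω) ≤ ⨅ t, (U t ω - Q t ω / 2) := le_ciInf hlb
      have h6 : -(⨅ t, (U t ω - Q t ω / 2)) ≤ (W ω).toReal + R ω := by linarith
      calc ENNReal.ofReal (-(⨅ t, (U t ω - Q t ω / 2)))
          ≤ ENNReal.ofReal ((W ω).toReal + R ω) := ENNReal.ofReal_le_ofReal h6
        _ ≤ ENNReal.ofReal ((W ω).toReal) + ENNReal.ofReal (R ω) := ENNReal.ofReal_add_le
        _ = W ω + (⨆ t, ENNReal.ofReal (Q t ω)) := by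
            rw [ENNReal.ofReal_toReal hWfin.ne, hR_def, ENNReal.ofReal_toReal hQSfin.ne]
    calc ∫⁻ ω, ENNReal.ofReal (-(⨅ t, (U t ω - Q t ω / 2))) ∂μ
        ≤ ∫⁻ ω, (W ω + (⨆ t, ENNReal.ofReal (Q t ω))) ∂μ := lintegral_mono_ae hptw
      _ = ∫⁻ ω, W ω ∂μ + ∫⁻ ω, (⨆ t, ENNReal.ofReal (Q t ω)) ∂μ :=
          lintegral_add_left hW_meas _
      _ < ⊤ := ENNReal.add_lt_top.2 ⟨hW_fin, hc⟩


end Stmt14Aux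

end Stmt14AuxSection

/-- Remark: for a stochastic exponential `M = exp(U - ⟨U⟩/2)`,
`E[log(1/I_∞)] < ∞ ↔ E[⟨U⟩_∞] < ∞`; moreover `log(1/I_∞) = - inf_t (U_t - ⟨U⟩_t/2)`, so
`E[⟨U⟩_∞] < ∞ ↔ E[inf_t (U_t - ⟨U⟩_t/2)] > -∞`. -/
theorem statement14 {Ω : Type*} {m0 : MeasurableSpace Ω} (μ : Measure Ω)
    [IsProbabilityMeasure μ] (ℱ : Filtration ℝ≥0 m0)
    (U Q : ℝ≥0 → Ω → ℝ)
    (hU : ContLocMart ℱ μ U) (hU0 : ∀ ω, U 0 ω = 0)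
    (hQ : IsQuadVar ℱ μ U Q) :
    ∀ M : ℝ≥0 → Ω → ℝ, (M = fun t ω => Real.exp (U t ω - Q t ω / 2)) →
      ((((∀ᵐ ω ∂μ, 0 < ⨅ t, M t ω) ∧
          ∫⁻ ω, ENNReal.ofReal (Real.log (⨅ t, M t ω)⁻¹) ∂μ < ⊤) ↔
        ∫⁻ ω, (⨆ t, ENNReal.ofReal (Q t ω)) ∂μ < ⊤)) ∧
      (∀ ω, Real.log (⨅ t, M t ω)⁻¹ = -(⨅ t, (U t ω - Q t ω / 2))) ∧
      ((∫⁻ ω, (⨆ t, ENNReal.ofReal (Q t ω)) ∂μ < ⊤) ↔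
        ((∀ᵐ ω ∂μ, BddBelow (Set.range fun t => U t ω - Q t ω / 2)) ∧
          ∫⁻ ω, ENNReal.ofReal (-(⨅ t, (U t ω - Q t ω / 2))) ∂μ < ⊤)) := by
  intro M hM
  subst hM
  obtain ⟨hUlm, hUad, hUct⟩ := hU
  obtain ⟨τ, hτst, hτae, hτmart⟩ := hUlm
  obtain ⟨⟨hQad, hQct, hQmono⟩, hQ0, hQlm⟩ := hQ
  obtain ⟨σ, hσst, hσae, hσmart⟩ := hQlm
  have hσmart' : ∀ n, Martingale
      (fun t ω => U (min t (σ n ω)) ω ^ 2 - Q (min t (σ n ω)) ω) ℱ μ := hσmart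
  have main : (∫⁻ ω, (⨆ t, ENNReal.ofReal (Q t ω)) ∂μ < ⊤) ↔
      ((∀ᵐ ω ∂μ, BddBelow (Set.range fun t => U t ω - Q t ω / 2)) ∧
        ∫⁻ ω, ENNReal.ofReal (-(⨅ t, (U t ω - Q t ω / 2))) ∂μ < ⊤) := by
    constructor
    · intro hcfin
      exact Stmt14Aux.dirB μ ℱ U Q hUad hUct hU0 hQad hQct hQmono hQ0 σ hσst hσae hσmart' hcfin
    · rintro ⟨hbdd, hint⟩
      exact Stmt14Aux.dirA μ ℱ U Q hUad hUct hU0 hQad hQct hQmono hQ0 τ hτst hτae hτmart hbdd hint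
  have klog : ∀ ω, Real.log (⨅ t, Real.exp (U t ω - Q t ω / 2))⁻¹
      = -(⨅ t, (U t ω - Q t ω / 2)) :=
    fun ω => Stmt14Aux.log_inv_iInf (fun t => U t ω - Q t ω / 2)
  refine ⟨?_, klog, main⟩
  beta_reduce
  have h1 : (∀ᵐ ω ∂μ, 0 < ⨅ t, Real.exp (U t ω - Q t ω / 2)) ↔
      (∀ᵐ ω ∂μ, BddBelow (Set.range fun t => U t ω - Q t ω / 2)) :=
    eventually_congr (Eventually.of_forall fun ω => Stmt14Aux.pos_iff_bddBelow _)
  have h2 : (∫⁻ ω, ENNReal.ofReal (Real.log (⨅ t, Real.exp (U t ω - Q t ω / 2))⁻¹) ∂μ)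
      = ∫⁻ ω, ENNReal.ofReal (-(⨅ t, (U t ω - Q t ω / 2))) ∂μ :=
    lintegral_congr fun ω => by rw [klog ω]
  rw [h2]
  exact (and_congr h1 Iff.rfl).trans main.symm
end
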